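/- (Median decomposition) For any weighted lattice polynomial function p : L^n → L, any index k ∈ [n], and any x ∈ L^n, p(x) = median(p_k^a(x), x_k, p_k^b(x)), where p_k^a and p_k^b are obtained from p by fixing the k-th argument to a and b respectively, and the median of three elements of a linear order is the middle one. -/
import Mathlib


open Finset MeasureTheory ProbabilityTheory

/-- Weighted lattice polynomial functions on the interval L = [a,b] ⊆ ℝ:
built inductively from projections, constants in [a,b], pointwise min and max. -/
inductive IsWLP (a b : ℝ) (n : ℕ) : ((Fin n → ℝ) → ℝ) → Prop
  | proj (k : Fin n) : IsWLP a b n (fun x => x k)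
  | const (c : ℝ) (hc : c ∈ Set.Icc a b) : IsWLP a b n (fun _ => c)
  | inf {p q} : IsWLP a b n p → IsWLP a b n q → IsWLP a b n (fun x => min (p x) (q x))
  | sup {p q} : IsWLP a b n p → IsWLP a b n q → IsWLP a b n (fun x => max (p x) (q x))

/-- The characteristic vector e_S of S ⊆ [n] in {a,b}^n. -/
def charVec (a b : ℝ) {n : ℕ} (S : Finset (Fin n)) : Fin n → ℝ := fun i => if i ∈ S then b else a

lemma wlp_mono (a b : ℝ) (n : ℕ) (p : (Fin n → ℝ) → ℝ) (hp : IsWLP a b n p) :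
    ∀ x y : Fin n → ℝ, (∀ i, x i ≤ y i) → p x ≤ p y := by
  induction hp with
  | proj k => intro x y h; exact h k
  | const c hc => intro x y h; exact le_refl c
  | inf hp hq ihp ihq => intro x y h; exact min_le_min (ihp x y h) (ihq x y h)
  | sup hp hq ihp ihq => intro x y h; exact max_le_max (ihp x y h) (ihq x y h)

lemma med_eq (u v w : ℝ) (h : u ≤ w) :
    max (max (min u v) (min v w)) (min w u) = max u (min v w) := by
  simp only [min_def, max_def]; split_ifs <;> linarith

lemma clamp_min (Ap Bp Aq Bq v : ℝ) (hp : Ap ≤ Bp) (hq : Aq ≤ Bq) :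
    min (max Ap (min v Bp)) (max Aq (min v Bq)) = max (min Ap Aq) (min v (min Bp Bq)) := by
  simp only [min_def, max_def]; split_ifs <;> linarith

lemma clamp_max (Ap Bp Aq Bq v : ℝ) (hp : Ap ≤ Bp) (hq : Aq ≤ Bq) :
    max (max Ap (min v Bp)) (max Aq (min v Bq)) = max (max Ap Aq) (min v (max Bp Bq)) := by
  simp only [min_def, max_def]; split_ifs <;> linarith

lemma update_le_update (a b : ℝ) (hab : a ≤ b) {n : ℕ} (x : Fin n → ℝ) (k : Fin n) :
    ∀ i, Function.update x k a i ≤ Function.update x k b i := by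
  intro i
  rcases eq_or_ne i k with h | h
  · subst h; simp [hab]
  · simp [Function.update_of_ne h]

/-- Median decomposition: p(x) = median(p_k^a(x), x_k, p_k^b(x)), where
median(u,v,w) = (u ∧ v) ∨ (v ∧ w) ∨ (w ∧ u). -/
theorem wlp_median_decomposition (a b : ℝ) (hab : a ≤ b) (n : ℕ)
    (p : (Fin n → ℝ) → ℝ) (hp : IsWLP a b n p) (k : Fin n) :
    ∀ x : Fin n → ℝ, (∀ i, x i ∈ Set.Icc a b) →
      p x = max (max (min (p (Function.update x k a)) (x k))
                     (min (x k) (p (Function.update x k b))))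
                (min (p (Function.update x k b)) (p (Function.update x k a))) := by
  induction hp with
  | proj j =>
    intro x hx
    rcases eq_or_ne j k with h | h
    · subst h
      obtain ⟨h1, h2⟩ := hx j
      simp only [Function.update_self]
      simp only [min_def, max_def]; split_ifs <;> linarith
    · simp only [Function.update_of_ne h]
      simp only [min_def, max_def]; split_ifs <;> linarith
  | const c hc =>
    intro x hx
    simp only [min_def, max_def]; split_ifs <;> linarith
  | inf hp hq ihp ihq =>
    rename_i f g
    intro x hx
    have hAf : f (Function.update x k a) ≤ f (Function.update x k b) :=
      wlp_mono a b n f hp _ _ (update_le_update a b hab x k)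
    have hAg : g (Function.update x k a) ≤ g (Function.update x k b) :=
      wlp_mono a b n g hq _ _ (update_le_update a b hab x k)
    have hAB : min (f (Function.update x k a)) (g (Function.update x k a)) ≤
        min (f (Function.update x k b)) (g (Function.update x k b)) :=
      min_le_min hAf hAg
    show min (f x) (g x) = _
    rw [ihp x hx, ihq x hx, med_eq _ _ _ hAf, med_eq _ _ _ hAg, med_eq _ _ _ hAB,
      clamp_min _ _ _ _ _ hAf hAg]
  | sup hp hq ihp ihq =>
    rename_i f g
    intro x hx
    have hAf : f (Function.update x k a) ≤ f (Function.update x k b) :=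
      wlp_mono a b n f hp _ _ (update_le_update a b hab x k)
    have hAg : g (Function.update x k a) ≤ g (Function.update x k b) :=
      wlp_mono a b n g hq _ _ (update_le_update a b hab x k)
    have hAB : max (f (Function.update x k a)) (g (Function.update x k a)) ≤
        max (f (Function.update x k b)) (g (Function.update x k b)) :=
      max_le_max hAf hAg
    show max (f x) (g x) = _
    rw [ihp x hx, ihq x hx, med_eq _ _ _ hAf, med_eq _ _ _ hAg, med_eq _ _ _ hAB,
      clamp_max _ _ _ _ _ hAf hAg]
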